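/- The normalizing constant of the n-dimensional GL distribution with density generator g_n(t) = t^{N-1} e^{-a t^s}/(1 + e^{-b t^s})^{2r} equals C_n = [Γ(n/2)/(π^{n/2})] · [s · b^{(1/s)(N + n/2 - 1)} / Γ((1/s)(N + n/2 - 1))] · [Φ*_{2r}(-1, (1/s)(N + n/2 - 1), a/b)]^{-1}, i.e., C_n · ∫_{ℝ^n} g_n(‖x‖²) dx = 1 (taking Σ = I, μ = 0). -/

import Mathlib

open MeasureTheory Real Set

/-- Generalized Hurwitz-Lerch zeta function, integral representation. -/
noncomputable def PhiInt (v z s a : ℝ) : ℝ :=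
  (1 / Real.Gamma s) *
    ∫ t in Ioi (0:ℝ), t ^ (s - 1) * Real.exp (-a * t) / (1 - z * Real.exp (-t)) ^ v

/-- The GL density generator. -/
noncomputable def glGen (N a b s r : ℝ) (t : ℝ) : ℝ :=
  t ^ (N - 1) * Real.exp (-a * t ^ s) / (1 + Real.exp (-b * t ^ s)) ^ (2 * r)

/-- The normalizing constant of the n-dimensional GL distribution (μ = 0, Σ = I):
C_n ∫_{ℝⁿ} g_n(‖x‖²) dx = 1 with the stated C_n. -/
theorem gl_normalizing_constant (n : ℕ) (hn : 0 < n) (N a b s r : ℝ)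
    (ha : 0 < a) (hb : 0 < b) (hs : 0 < s) (hr : 0 ≤ r) (hNn : 2 < 2 * N + n) :
    (Real.Gamma ((n : ℝ) / 2) / Real.pi ^ ((n : ℝ) / 2)) *
      (s * b ^ ((1 / s) * (N + (n : ℝ) / 2 - 1)) /
        Real.Gamma ((1 / s) * (N + (n : ℝ) / 2 - 1))) *
      (PhiInt (2 * r) (-1) ((1 / s) * (N + (n : ℝ) / 2 - 1)) (a / b))⁻¹ *
      (∫ x : EuclideanSpace ℝ (Fin n), glGen N a b s r (‖x‖ ^ 2)) = 1 := by
  have hc : 0 < a / b := div_pos ha hb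
  set p : ℝ := (1 / s) * (N + (n : ℝ) / 2 - 1) with hpdef
  have hNpos : 0 < N + (n : ℝ) / 2 - 1 := by linarith
  have hp : 0 < p := mul_pos (by positivity) hNpos
  set K : ℝ → ℝ := fun t => t ^ (p - 1) * Real.exp (-(a/b * t)) / (1 + Real.exp (-t)) ^ (2*r)
    with hKdef
  set J : ℝ := ∫ t in Ioi (0:ℝ), K t with hJdef
  -- integrability of K
  have hbound : IntegrableOn (fun t : ℝ => t ^ (p-1) * Real.exp (-(a/b * t))) (Ioi 0) := by
    have h0 : IntegrableOn (fun x : ℝ => Real.exp (-x) * x ^ (p - 1)) (Ioi 0) :=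
      Real.GammaIntegral_convergent hp
    have h1 : IntegrableOn (fun t : ℝ => Real.exp (-(a/b*t)) * (a/b*t) ^ (p-1)) (Ioi 0) := by
      have := (integrableOn_Ioi_comp_mul_left_iff
        (fun x : ℝ => Real.exp (-x) * x ^ (p - 1)) 0 hc).2 (by simpa using h0)
      simpa using this
    have h2 : IntegrableOn
        (fun t : ℝ => (a/b) ^ (1-p) * (Real.exp (-(a/b*t)) * (a/b*t) ^ (p-1))) (Ioi 0) :=
      h1.const_mul ((a/b) ^ (1-p))
    refine h2.congr_fun (fun t ht => ?_) measurableSet_Ioi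
    have ht' : (0:ℝ) < t := ht
    dsimp only
    rw [Real.mul_rpow hc.le ht'.le]
    rw [show (a/b) ^ (1-p) * (Real.exp (-(a/b*t)) * ((a/b) ^ (p-1) * t ^ (p-1)))
        = ((a/b) ^ (1-p) * (a/b) ^ (p-1)) * (t ^ (p-1) * Real.exp (-(a/b*t))) by ring,
      ← Real.rpow_add hc]
    norm_num
  have hKmeas : AEStronglyMeasurable K (volume.restrict (Ioi 0)) := by
    apply Measurable.aestronglyMeasurable
    simp only [hKdef]
    fun_prop
  have hKint : IntegrableOn K (Ioi 0) := by
    refine hbound.mono' hKmeas ?_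
    filter_upwards [self_mem_ae_restrict measurableSet_Ioi] with t ht
    have ht' : (0:ℝ) < t := ht
    have hden : (1:ℝ) ≤ (1 + Real.exp (-t)) ^ (2*r) :=
      Real.one_le_rpow (by linarith [Real.exp_pos (-t)]) (by positivity)
    have hnum : (0:ℝ) ≤ t ^ (p-1) * Real.exp (-(a/b * t)) := by positivity
    have habs : ‖K t‖ = K t := by
      rw [Real.norm_eq_abs]
      refine abs_of_nonneg ?_
      simp only [hKdef]; positivity
    rw [habs]
    simp only [hKdef]
    exact div_le_self hnum hden
  have hnn : 0 ≤ᵐ[volume.restrict (Ioi (0:ℝ))] K := by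
    filter_upwards [self_mem_ae_restrict measurableSet_Ioi] with t ht
    have ht' : (0:ℝ) < t := ht
    simp only [hKdef]; positivity
  have hJpos : 0 < J := by
    rw [hJdef, setIntegral_pos_iff_support_of_nonneg_ae hnn hKint]
    have hsupp : Ioi (0:ℝ) ⊆ Function.support K ∩ Ioi 0 := by
      intro t ht
      have ht' : (0:ℝ) < t := ht
      exact ⟨ne_of_gt (by simp only [hKdef]; positivity), ht⟩
    calc (0:ENNReal) < volume (Ioi (0:ℝ)) := by simp
      _ ≤ volume (Function.support K ∩ Ioi 0) := measure_mono hsupp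
  have hGamp : 0 < Real.Gamma p := Real.Gamma_pos_of_pos hp
  have hPhi : PhiInt (2*r) (-1) p (a/b) = (1 / Real.Gamma p) * J := by
    simp only [PhiInt, neg_one_mul, sub_neg_eq_add, hJdef, hKdef, neg_mul, one_mul]
  -- the spatial integral via polar coordinates
  haveI : Nonempty (Fin n) := Fin.pos_iff_nonempty.mp hn
  haveI : Inhabited (Fin n) := ⟨⟨0, hn⟩⟩
  have hdim : Module.finrank ℝ (EuclideanSpace ℝ (Fin n)) = n := finrank_euclideanSpace_fin
  haveI : Nontrivial (EuclideanSpace ℝ (Fin n)) := by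
    apply Module.nontrivial_of_finrank_pos (R := ℝ)
    rw [hdim]; exact hn
  have hA := integral_fun_norm_addHaar (volume : Measure (EuclideanSpace ℝ (Fin n)))
      (fun y => glGen N a b s r (y ^ 2))
  rw [hdim] at hA
  have hvol : (volume (Metric.ball (0:EuclideanSpace ℝ (Fin n)) 1)).toReal
      = Real.pi ^ ((n:ℝ)/2) / Real.Gamma ((n:ℝ)/2 + 1) := by
    rw [EuclideanSpace.volume_ball]
    simp only [ENNReal.ofReal_one, one_pow, one_mul, Fintype.card_fin]
    rw [ENNReal.toReal_ofReal (by positivity)]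
    congr 1
    rw [← Real.rpow_natCast (Real.sqrt Real.pi) n, Real.sqrt_eq_rpow,
      ← Real.rpow_mul Real.pi_pos.le]
    congr 1
    ring
  -- substitution u = y^2
  have hB : (∫ y in Ioi (0:ℝ), y ^ (n-1) * glGen N a b s r (y^2))
      = ∫ u in Ioi (0:ℝ), (1/2) * (u ^ ((n:ℝ)/2 - 1) * glGen N a b s r u) := by
    rw [← integral_comp_rpow_Ioi_of_pos
      (g := fun u => (1/2) * (u ^ ((n:ℝ)/2 - 1) * glGen N a b s r u)) two_pos]
    refine setIntegral_congr_fun measurableSet_Ioi (fun x hx => ?_)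
    have hx' : (0:ℝ) < x := hx
    have e1 : x ^ ((2:ℝ)) = x ^ (2:ℕ) := by
      rw [← Real.rpow_natCast x 2]; norm_num
    have e2 : (x ^ (2:ℕ)) ^ ((n:ℝ)/2-1) = x ^ ((n:ℝ)-2) := by
      rw [← Real.rpow_natCast x 2, ← Real.rpow_mul hx'.le]
      congr 1; push_cast; ring
    have e3 : x ^ (n-1:ℕ) = x ^ ((n:ℝ)-2) * x := by
      rw [← Real.rpow_natCast x (n-1), ← Real.rpow_add_one hx'.ne']
      congr 1
      rw [Nat.cast_sub hn]
      push_cast; ring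
    rw [smul_eq_mul, e1, e2, e3, show ((2:ℝ)-1) = (1:ℝ) by norm_num, Real.rpow_one]
    ring
  -- substitution v = u^s
  have hsp : s * p = N + (n:ℝ)/2 - 1 := by
    rw [hpdef]; field_simp
  have hC : (∫ u in Ioi (0:ℝ), (1/2) * (u ^ ((n:ℝ)/2 - 1) * glGen N a b s r u))
      = ∫ v in Ioi (0:ℝ),
          (1/(2*s)) * (v ^ (p-1) * Real.exp (-a*v) / (1 + Real.exp (-b*v)) ^ (2*r)) := by
    rw [← integral_comp_rpow_Ioi_of_pos
      (g := fun v => (1/(2*s)) * (v ^ (p-1) * Real.exp (-a*v) / (1 + Real.exp (-b*v)) ^ (2*r)))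
      hs]
    refine setIntegral_congr_fun measurableSet_Ioi (fun x hx => ?_)
    have hx' : (0:ℝ) < x := hx
    rw [smul_eq_mul]
    simp only [glGen]
    rw [← Real.rpow_mul hx'.le]
    have key : x ^ ((n:ℝ)/2-1) * x ^ (N-1) = x ^ (s-1) * x ^ (s*(p-1)) := by
      rw [← Real.rpow_add hx', ← Real.rpow_add hx']
      congr 1
      rw [mul_sub, hsp]; ring
    have hhalf : s * (1/(2*s)) = 1/2 := by field_simp
    rw [show s * x ^ (s-1) * (1/(2*s) * (x ^ (s*(p-1)) * Real.exp (-a*x^s)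
          / (1+Real.exp (-b*x^s))^(2*r)))
        = (s * (1/(2*s))) * (x ^ (s-1) * x ^ (s*(p-1)) * Real.exp (-a*x^s)
          / (1+Real.exp (-b*x^s))^(2*r)) by ring, hhalf, ← key]
    ring
  -- substitution t = b v
  have hD : (∫ v in Ioi (0:ℝ),
        (1/(2*s)) * (v ^ (p-1) * Real.exp (-a*v) / (1 + Real.exp (-b*v)) ^ (2*r)))
      = b⁻¹ * ((1/(2*s)) * b ^ ((1:ℝ)-p) * J) := by
    have hsub := integral_comp_mul_left_Ioi
      (fun t => (1/(2*s)) * b ^ ((1:ℝ)-p) * K t) 0 hb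
    rw [mul_zero] at hsub
    have hptw : ∀ v ∈ Ioi (0:ℝ),
        (1/(2*s)) * (v ^ (p-1) * Real.exp (-a*v) / (1 + Real.exp (-b*v)) ^ (2*r))
        = (1/(2*s)) * b ^ ((1:ℝ)-p) * K (b*v) := by
      intro v hv
      have hv' : (0:ℝ) < v := hv
      simp only [hKdef]
      rw [Real.mul_rpow hb.le hv'.le]
      rw [show a/b*(b*v) = a*v by field_simp]
      rw [show (1/(2*s)) * b ^ ((1:ℝ)-p) * (b ^ (p-1) * v ^ (p-1) * Real.exp (-(a*v))
            / (1 + Real.exp (-(b*v))) ^ (2*r))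
          = (b ^ ((1:ℝ)-p) * b ^ (p-1)) * ((1/(2*s)) * (v ^ (p-1) * Real.exp (-(a*v))
            / (1 + Real.exp (-(b*v))) ^ (2*r))) by ring, ← Real.rpow_add hb]
      norm_num
    rw [setIntegral_congr_fun measurableSet_Ioi hptw, hsub, smul_eq_mul]
    congr 1
    exact MeasureTheory.integral_const_mul _ K
  -- put everything together
  rw [hA, measureReal_def, hvol, nsmul_eq_mul, smul_eq_mul]
  simp only [smul_eq_mul]
  rw [show (∫ y in Ioi (0:ℝ), y ^ (n-1) * glGen N a b s r (y^2))
      = b⁻¹ * ((1/(2*s)) * b ^ ((1:ℝ)-p) * J) from hB.trans (hC.trans hD)]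
  rw [hPhi]
  have hG2 : Real.Gamma ((n:ℝ)/2 + 1) = ((n:ℝ)/2) * Real.Gamma ((n:ℝ)/2) :=
    Real.Gamma_add_one (by positivity)
  have hbp : b ^ ((1:ℝ)-p) = b / b ^ p := by
    rw [Real.rpow_sub hb, Real.rpow_one]
  rw [hG2, hbp]
  have h1 : Real.Gamma ((n:ℝ)/2) ≠ 0 := (Real.Gamma_pos_of_pos (by positivity)).ne'
  have h2 : Real.pi ^ ((n:ℝ)/2) ≠ 0 := (Real.rpow_pos_of_pos Real.pi_pos _).ne'
  have h3 : b ^ p ≠ 0 := (Real.rpow_pos_of_pos hb _).ne'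
  have h4 : (n:ℝ) ≠ 0 := Nat.cast_ne_zero.mpr hn.ne'
  field_simp
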